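/- Let S be a subgroup of the circle group 𝕋 = ℝ/ℤ. Identify each t ∈ 𝕋 with the character of ℤ given by n ↦ n·t, and let τ_S denote the coarsest topology on ℤ making all characters n ↦ n·t with t ∈ S continuous. Then for every integer k ≥ 1, the subgroup kℤ is closed in (ℤ, τ_S) if and only if the class of 1/k in ℝ/ℤ belongs to S. -/

import Mathlib

/-- The coarsest topology on `ℤ` making every character `n ↦ n • t`, `t ∈ S`,
continuous. -/
noncomputable def tauZ (S : AddSubgroup (AddCircle (1 : ℝ))) : TopologicalSpace ℤ :=
  ⨅ t ∈ S, TopologicalSpace.induced (fun n : ℤ => n • t) inferInstance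

open MeasureTheory Set Function AddCircle

noncomputable section Stmt19Aux

local notation "𝕋" => AddCircle (1 : ℝ)

variable {ι : Type*}

/-- The character exponent: `z ↦ ∑ i, a i • z i`. -/
def caF (a : ι →₀ ℤ) (z : ι → 𝕋) : 𝕋 := a.sum fun i n => n • z i

lemma caF_apply (a : ι →₀ ℤ) (z : ι → 𝕋) :
    caF a z = ∑ i ∈ a.support, a i • z i := rfl

lemma caF_add_arg (a : ι →₀ ℤ) (z w : ι → 𝕋) : caF a (z + w) = caF a z + caF a w := by
  simp only [caF_apply, Pi.add_apply, smul_add, Finset.sum_add_distrib]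

lemma caF_zsmul_arg (a : ι →₀ ℤ) (n : ℤ) (z : ι → 𝕋) : caF a (n • z) = n • caF a z := by
  simp only [caF_apply, Pi.smul_apply, Finset.smul_sum, smul_comm n]

lemma caF_continuous (a : ι →₀ ℤ) : Continuous (caF a) := by
  show Continuous fun z : ι → 𝕋 => ∑ i ∈ a.support, a i • z i
  exact continuous_finset_sum _ fun i _ => (continuous_apply i).zsmul _

lemma caF_add_index (a b : ι →₀ ℤ) (z : ι → 𝕋) : caF (a + b) z = caF a z + caF b z :=
  Finsupp.sum_add_index' (fun i => zero_smul ℤ (z i)) (fun i m n => add_smul m n (z i))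

lemma caF_zero_index (z : ι → 𝕋) : caF (0 : ι →₀ ℤ) z = 0 := by
  simp [caF]

lemma caF_neg_index (a : ι →₀ ℤ) (z : ι → 𝕋) : caF (-a) z = - caF a z := by
  have := caF_add_index a (-a) z
  rw [add_neg_cancel, caF_zero_index] at this
  exact eq_neg_of_add_eq_zero_right this.symm

/-- The character as a continuous map to `ℂ`. -/
def eChar (a : ι →₀ ℤ) : C((ι → 𝕋), ℂ) :=
  ⟨fun z => (toCircle (caF a z) : ℂ),
    continuous_subtype_val.comp (continuous_toCircle.comp (caF_continuous a))⟩

lemma eChar_apply (a : ι →₀ ℤ) (z : ι → 𝕋) : eChar a z = (toCircle (caF a z) : ℂ) := rfl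

lemma eChar_mul (a b : ι →₀ ℤ) : eChar (a + b) = eChar a * eChar b := by
  ext z
  simp only [eChar_apply, ContinuousMap.mul_apply, caF_add_index, toCircle_add, Circle.coe_mul]

lemma eChar_zero : eChar (0 : ι →₀ ℤ) = 1 := by
  ext z
  simp [eChar_apply, caF_zero_index]

lemma toCircle_neg' (u : 𝕋) : toCircle (-u) = (toCircle u)⁻¹ := by
  refine eq_inv_of_mul_eq_one_right ?_
  rw [← toCircle_add, add_neg_cancel, toCircle_zero]

/-- The star subalgebra generated by the characters. -/
def eSubalgebra (ι : Type*) : StarSubalgebra ℂ C((ι → 𝕋), ℂ) where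
  toSubalgebra := Algebra.adjoin ℂ (range eChar)
  star_mem' := by
    show Algebra.adjoin ℂ (range (eChar (ι := ι))) ≤
      star (Algebra.adjoin ℂ (range (eChar (ι := ι))))
    refine Algebra.adjoin_le ?_
    rintro - ⟨a, rfl⟩
    refine Algebra.subset_adjoin ⟨-a, ?_⟩
    ext z
    show eChar (-a) z = star (eChar a z)
    rw [eChar_apply, eChar_apply, caF_neg_index, toCircle_neg', Circle.coe_inv_eq_conj]
    rfl

lemma eSubalgebra_coe (ι : Type*) :
    Subalgebra.toSubmodule (eSubalgebra ι).toSubalgebra =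
      Submodule.span ℂ (range (eChar (ι := ι))) := by
  apply Algebra.adjoin_eq_span_of_subset
  refine Subset.trans ?_ Submodule.subset_span
  intro x hx
  refine Submonoid.closure_induction (fun _ => id) ⟨0, eChar_zero⟩ ?_ hx
  rintro - - - - ⟨m, rfl⟩ ⟨n, rfl⟩
  exact ⟨m + n, eChar_mul m n⟩

lemma eSubalgebra_separatesPoints (ι : Type*) : (eSubalgebra ι).SeparatesPoints := by
  intro z w hzw
  obtain ⟨i, hi⟩ : ∃ i, z i ≠ w i := by
    by_contra h
    push_neg at h
    exact hzw (funext h)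
  refine ⟨_, ⟨eChar (Finsupp.single i 1), Algebra.subset_adjoin ⟨_, rfl⟩, rfl⟩, ?_⟩
  have hz : ∀ v : ι → 𝕋, caF (Finsupp.single i 1) v = v i := by
    intro v
    rw [caF]
    rw [Finsupp.sum_single_index (zero_smul ℤ (v i))]
    exact one_smul ℤ (v i)
  dsimp only
  rw [eChar_apply, eChar_apply, hz, hz]
  intro h
  rw [Circle.coe_inj] at h
  exact hi (injective_toCircle one_ne_zero h)

lemma denseECharSpan (ι : Type*) :
    Dense ((Submodule.span ℂ (range (eChar (ι := ι))) : Submodule ℂ C((ι → 𝕋), ℂ)) :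
      Set C((ι → 𝕋), ℂ)) := by
  rw [Submodule.dense_iff_topologicalClosure_eq_top, ← eSubalgebra_coe]
  exact congr_arg (Subalgebra.toSubmodule <| StarSubalgebra.toSubalgebra ·)
    (ContinuousMap.starSubalgebra_topologicalClosure_eq_top_of_separatesPoints _
      (eSubalgebra_separatesPoints ι))


lemma kronecker (x y : ι → 𝕋)
    (hxy : ∀ a : ι →₀ ℤ, caF a x = 0 → caF a y = 0) :
    y ∈ closure ((AddSubgroup.zmultiples x : AddSubgroup (ι → 𝕋)) : Set (ι → 𝕋)) := by
  by_contra hy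
  set H : AddSubgroup (ι → 𝕋) := (AddSubgroup.zmultiples x).topologicalClosure with hH
  have hHset : (H : Set (ι → 𝕋)) =
      closure ((AddSubgroup.zmultiples x : AddSubgroup (ι → 𝕋)) : Set (ι → 𝕋)) := rfl
  have hHc : IsClosed (H : Set (ι → 𝕋)) := by rw [hHset]; exact isClosed_closure
  have hyH : y ∉ (H : Set (ι → 𝕋)) := by rw [hHset]; exact hy
  have hxH : x ∈ H := by
    rw [SetLike.mem_coe.symm, hHset]
    exact subset_closure (AddSubgroup.mem_zmultiples x)
  haveI : CompactSpace ↥H := isCompact_iff_compactSpace.mp hHc.isCompact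
  letI : MeasurableSpace ↥H := borel _
  haveI : BorelSpace ↥H := ⟨rfl⟩
  haveI : Nonempty ↥H := ⟨0⟩
  set μ : Measure ↥H := Measure.addHaarMeasure ⊤ with hμ
  haveI : IsProbabilityMeasure μ := ⟨by
    simpa [hμ] using
      Measure.addHaarMeasure_self (K₀ := (⊤ : TopologicalSpace.PositiveCompacts ↥H))⟩
  -- vanishing of characters on `H`
  have hvanish : ∀ a : ι →₀ ℤ, caF a x = 0 → ∀ z ∈ H, caF a z = 0 := by
    intro a ha z hz
    have hK : IsClosed {w : ι → 𝕋 | caF a w = 0} :=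
      isClosed_eq (caF_continuous a) continuous_const
    have hsub : ((AddSubgroup.zmultiples x : AddSubgroup (ι → 𝕋)) : Set (ι → 𝕋)) ⊆
        {w : ι → 𝕋 | caF a w = 0} := by
      rintro - ⟨n, rfl⟩
      show caF a (n • x) = 0
      rw [caF_zsmul_arg, ha, smul_zero]
    have := closure_minimal hsub hK
    exact this (hHset ▸ hz)
  -- integrability
  have hint : ∀ (g : C((ι → 𝕋), ℂ)) (ψ : ↥H → (ι → 𝕋)), Continuous ψ →
      Integrable (fun h => g (ψ h)) μ := by
    intro g ψ hψ
    exact (g.continuous.comp hψ).integrable_of_hasCompactSupport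
      (IsClosed.isCompact (isClosed_tsupport _))
  -- the two integration functionals
  have hcontψ₁ : Continuous (fun h : ↥H => (h : ι → 𝕋) + y) :=
    continuous_subtype_val.add continuous_const
  have hcontψ₂ : Continuous (fun h : ↥H => (h : ι → 𝕋)) := continuous_subtype_val
  let L : (↥H → (ι → 𝕋)) → (C((ι → 𝕋), ℂ) →ₗ[ℂ] ℂ) := fun ψ => by
    classical
    exact if hψ : Continuous ψ then
      { toFun := fun g => ∫ h, g (ψ h) ∂μ
        map_add' := fun g₁ g₂ => by
          simp only [ContinuousMap.add_apply]
          exact integral_add (hint g₁ ψ hψ) (hint g₂ ψ hψ)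
        map_smul' := fun c g => by
          simp only [ContinuousMap.smul_apply, RingHom.id_apply]
          exact integral_smul c _ }
    else 0
  have hLdef : ∀ (ψ : ↥H → (ι → 𝕋)) (hψ : Continuous ψ) (g : C((ι → 𝕋), ℂ)),
      L ψ g = ∫ h, g (ψ h) ∂μ := by
    intro ψ hψ g
    simp only [L, dif_pos hψ]
    rfl
  have hLcont : ∀ (ψ : ↥H → (ι → 𝕋)), Continuous ψ → Continuous fun g => L ψ g := by
    intro ψ hψ
    have : LipschitzWith 1 fun g : C((ι → 𝕋), ℂ) => L ψ g := by
      refine LipschitzWith.of_dist_le_mul fun g₁ g₂ => ?_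
      rw [hLdef ψ hψ, hLdef ψ hψ, NNReal.coe_one, one_mul, dist_eq_norm,
        ← integral_sub (hint g₁ ψ hψ) (hint g₂ ψ hψ)]
      have : ‖∫ h, (g₁ (ψ h) - g₂ (ψ h)) ∂μ‖ ≤ dist g₁ g₂ * (μ univ).toReal := by
        refine norm_integral_le_of_norm_le_const (Filter.Eventually.of_forall fun h => ?_)
        rw [← dist_eq_norm]
        exact ContinuousMap.dist_apply_le_dist _
      simpa [measure_univ] using this
    exact this.continuous
  -- the functionals agree on the characters
  have hEq : Set.EqOn (fun g => L (fun h : ↥H => (h : ι → 𝕋) + y) g)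
      (fun g => L (fun h : ↥H => (h : ι → 𝕋)) g) (range (eChar (ι := ι))) := by
    rintro - ⟨a, rfl⟩
    simp only
    rw [hLdef _ hcontψ₁, hLdef _ hcontψ₂]
    by_cases ha : caF a x = 0
    · have h₁ : ∀ h : ↥H, eChar a ((h : ι → 𝕋) + y) = 1 := by
        intro h
        rw [eChar_apply, caF_add_arg, hvanish a ha _ h.2, hxy a ha, add_zero, toCircle_zero,
          Circle.coe_one]
      have h₂ : ∀ h : ↥H, eChar a ((h : ι → 𝕋)) = 1 := by
        intro h
        rw [eChar_apply, hvanish a ha _ h.2, toCircle_zero, Circle.coe_one]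
      simp only [h₁, h₂]
    · -- nontrivial character: both integrals are zero
      have hc1 : (toCircle (caF a x) : ℂ) ≠ 1 := by
        intro h
        exact ha (injective_toCircle one_ne_zero
          (by rw [toCircle_zero]; exact Circle.coe_eq_one.mp h))
      have h2 : ∀ h : ↥H, eChar a (((h + (⟨x, hxH⟩ : ↥H) : ↥H) : ι → 𝕋)) =
          eChar a ((h : ι → 𝕋)) * (toCircle (caF a x) : ℂ) := by
        intro h
        rw [eChar_apply, eChar_apply]
        have hcoe : ((h + (⟨x, hxH⟩ : ↥H) : ↥H) : ι → 𝕋) = (h : ι → 𝕋) + x := rfl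
        rw [hcoe, caF_add_arg, toCircle_add, Circle.coe_mul]
      have htrans : (∫ h : ↥H, (eChar a ((h : ι → 𝕋)) : ℂ) ∂μ) =
          (∫ h : ↥H, (eChar a ((h : ι → 𝕋)) : ℂ) ∂μ) * (toCircle (caF a x) : ℂ) := by
        conv_lhs => rw [← integral_add_right_eq_self
          (fun h : ↥H => (eChar a ((h : ι → 𝕋)) : ℂ)) (⟨x, hxH⟩ : ↥H)]
        simp only [h2]
        exact integral_mul_const _ _
      have hI0 : (∫ h : ↥H, (eChar a ((h : ι → 𝕋)) : ℂ) ∂μ) = 0 := by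
        by_contra hne
        exact hc1 (mul_left_cancel₀ hne (by rw [mul_one]; exact htrans)).symm
      have h3 : ∀ h : ↥H, eChar a ((h : ι → 𝕋) + y) =
          eChar a ((h : ι → 𝕋)) * (toCircle (caF a y) : ℂ) := by
        intro h
        rw [eChar_apply, eChar_apply, caF_add_arg, toCircle_add, Circle.coe_mul]
      have hIy : (∫ h : ↥H, (eChar a ((h : ι → 𝕋) + y) : ℂ) ∂μ) = 0 := by
        simp only [h3]
        rw [integral_mul_const, hI0, zero_mul]
      rw [hIy, hI0]
  -- hence they agree everywhere
  have hLL : (fun g => L (fun h : ↥H => (h : ι → 𝕋) + y) g) =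
      (fun g => L (fun h : ↥H => (h : ι → 𝕋)) g) :=
    Continuous.ext_on (denseECharSpan ι) (hLcont _ hcontψ₁) (hLcont _ hcontψ₂)
      fun g hg => LinearMap.eqOn_span hEq hg
  -- Urysohn function separating `H` from `y`
  obtain ⟨f, hf0, hf1, hf01⟩ := exists_continuous_zero_one_of_isClosed hHc isClosed_singleton
    (Set.disjoint_singleton_right.mpr hyH)
  set fc : C((ι → 𝕋), ℂ) := ⟨fun z => ((f z : ℝ) : ℂ),
    Complex.continuous_ofReal.comp f.continuous⟩ with hfc
  have e1 : L (fun h : ↥H => (h : ι → 𝕋) + y) fc = L (fun h : ↥H => (h : ι → 𝕋)) fc :=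
    congrFun hLL fc
  rw [hLdef _ hcontψ₁, hLdef _ hcontψ₂] at e1
  have e2 : (∫ h : ↥H, fc ((h : ι → 𝕋)) ∂μ) = 0 := by
    have : ∀ h : ↥H, fc ((h : ι → 𝕋)) = 0 := by
      intro h
      have := hf0 h.2
      simp only [hfc, ContinuousMap.coe_mk]
      rw [show f ((h : ι → 𝕋)) = 0 from this]
      simp
    simp only [this, integral_zero]
  rw [e2] at e1
  -- but the left side is positive
  set g : ↥H → ℝ := fun h => f ((h : ι → 𝕋) + y) with hg
  have hgc : Continuous g := f.continuous.comp hcontψ₁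
  have hgnn : 0 ≤ g := fun h => (hf01 _).1
  have hgint : Integrable g μ := hgc.integrable_of_hasCompactSupport
    (IsClosed.isCompact (isClosed_tsupport _))
  have hgzero : (∫ h, g h ∂μ) = 0 := by
    have : (∫ h : ↥H, fc ((h : ι → 𝕋) + y) ∂μ) = ((∫ h, g h ∂μ : ℝ) : ℂ) := by
      exact integral_ofReal
    rw [this] at e1
    exact_mod_cast e1
  have hgae : g =ᵐ[μ] 0 := (integral_eq_zero_iff_of_nonneg hgnn hgint).mp hgzero
  have hU : IsOpen {h : ↥H | 0 < g h} := isOpen_lt continuous_const hgc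
  have hU0 : (0 : ↥H) ∈ {h : ↥H | 0 < g h} := by
    have : g 0 = 1 := by
      simp only [hg]
      have : ((0 : ↥H) : ι → 𝕋) + y = y := by simp
      rw [this]
      exact hf1 rfl
    simp [Set.mem_setOf_eq, this]
  have hpos : 0 < μ {h : ↥H | 0 < g h} :=
    (hU.measure_pos μ ⟨0, hU0⟩)
  have hnull : μ {h : ↥H | 0 < g h} = 0 := by
    refine measure_mono_null ?_ (by simpa [Filter.EventuallyEq, ae_iff] using hgae)
    intro h hh
    simp only [Set.mem_setOf_eq] at hh ⊢
    exact ne_of_gt hh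
  exact absurd hnull hpos.ne'


lemma coe_zsmul' (j : ℤ) (r : ℝ) : j • ((r : ℝ) : 𝕋) = (((j • r : ℝ)) : 𝕋) :=
  (map_zsmul (QuotientAddGroup.mk' (AddSubgroup.zmultiples (1:ℝ))) j r).symm

lemma zsmul_inv_eq_zero_iff {k : ℤ} (hk : 1 ≤ k) (n : ℤ) :
    n • ((((k:ℝ))⁻¹ : ℝ) : 𝕋) = 0 ↔ k ∣ n := by
  have hk0 : (k : ℝ) ≠ 0 := by
    have : (0:ℝ) < k := by exact_mod_cast hk.trans_lt' zero_lt_one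
    exact this.ne'
  rw [coe_zsmul', AddCircle.coe_eq_zero_iff]
  constructor
  · rintro ⟨m, hm⟩
    refine ⟨m, ?_⟩
    have : (m : ℝ) * 1 = (n : ℝ) * (k:ℝ)⁻¹ := by
      simpa [zsmul_eq_mul, smul_eq_mul] using hm
    have h2 : (m : ℝ) * k = n := by
      field_simp at this
      linarith [this]
    exact_mod_cast (by linarith [h2] : (n:ℝ) = (k * m : ℝ))
  · rintro ⟨m, rfl⟩
    refine ⟨m, ?_⟩
    simp only [zsmul_eq_mul, smul_eq_mul, mul_one]
    push_cast
    field_simp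

lemma torsion_exists {k : ℤ} (hk : 1 ≤ k) (s : 𝕋) (h : k • s = 0) :
    ∃ j : ℤ, s = j • ((((k:ℝ))⁻¹ : ℝ) : 𝕋) := by
  have hk0 : (k : ℝ) ≠ 0 := by
    have : (0:ℝ) < k := by exact_mod_cast hk.trans_lt' zero_lt_one
    exact this.ne'
  obtain ⟨r, rfl⟩ := QuotientAddGroup.mk_surjective s
  rw [show ((QuotientAddGroup.mk r : 𝕋)) = ((r : ℝ) : 𝕋) from rfl] at h ⊢
  rw [coe_zsmul', AddCircle.coe_eq_zero_iff] at h
  obtain ⟨m, hm⟩ := h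
  refine ⟨m, ?_⟩
  rw [coe_zsmul']
  congr 1
  simp only [zsmul_eq_mul, smul_eq_mul, mul_one] at hm ⊢
  field_simp
  linarith [hm]

end Stmt19Aux

section Main

local notation "𝕋" => AddCircle (1 : ℝ)

lemma tauZ_eq (S : AddSubgroup 𝕋) :
    tauZ S = TopologicalSpace.induced
      (fun n : ℤ => fun t : S => n • (t : 𝕋)) Pi.topologicalSpace := by
  have h1 : (Pi.topologicalSpace : TopologicalSpace (S → 𝕋)) =
      ⨅ t : S, TopologicalSpace.induced (fun z : S → 𝕋 => z t) inferInstance := rfl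
  rw [h1, induced_iInf]
  simp only [induced_compose]
  rw [tauZ, iInf_subtype]
  rfl

theorem stmt19 (S : AddSubgroup (AddCircle (1 : ℝ))) (k : ℤ) (hk : 1 ≤ k) :
    @IsClosed ℤ (tauZ S) ((AddSubgroup.zmultiples k : AddSubgroup ℤ) : Set ℤ) ↔
      (↑((k : ℝ)⁻¹) : AddCircle (1 : ℝ)) ∈ S := by
  have hk0 : (k : ℝ) ≠ 0 := by
    have : (0:ℝ) < k := by exact_mod_cast hk.trans_lt' zero_lt_one
    exact this.ne'
  set u : 𝕋 := (↑((k : ℝ)⁻¹) : 𝕋) with hu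
  have hku : k • u = 0 := by
    rw [hu, coe_zsmul']
    rw [AddCircle.coe_eq_zero_iff]
    exact ⟨1, by simp [smul_eq_mul, zsmul_eq_mul]; field_simp⟩
  have hmemZ : ∀ n : ℤ, n ∈ AddSubgroup.zmultiples k ↔ k ∣ n := fun n =>
    Int.mem_zmultiples_iff
  constructor
  · -- hard direction
    intro hclosed
    by_contra hS
    rw [tauZ_eq S] at hclosed
    obtain ⟨C, hCclosed, hCpre⟩ := isClosed_induced_iff.mp hclosed
    -- the subgroup of integers j with j • u ∈ S
    set D : AddSubgroup ℤ :=
      { carrier := {j : ℤ | j • u ∈ S}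
        zero_mem' := by simp [S.zero_mem]
        add_mem' := by
          intro a b ha hb
          simp only [Set.mem_setOf_eq, add_zsmul] at *
          exact S.add_mem ha hb
        neg_mem' := by
          intro a ha
          simp only [Set.mem_setOf_eq, neg_zsmul] at *
          exact S.neg_mem ha } with hD
    have hmemD : ∀ j : ℤ, j ∈ D ↔ j • u ∈ S := fun j => Iff.rfl
    obtain ⟨d, hd⟩ := Int.subgroup_cyclic D
    rw [← AddSubgroup.zmultiples_eq_closure] at hd
    have hkD : k ∈ D := by rw [hmemD, hku]; exact S.zero_mem
    have h1D : (1 : ℤ) ∉ D := by rw [hmemD, one_zsmul]; exact hS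
    have hdD : d ∈ D := by rw [hd]; exact AddSubgroup.mem_zmultiples d
    have hdk : d ∣ k := by
      have := hkD; rw [hd, Int.mem_zmultiples_iff] at this; exact this
    obtain ⟨e, hke⟩ := hdk
    have hknde : ¬ k ∣ e := by
      rintro ⟨c, rfl⟩
      have hkne : k ≠ 0 := by omega
      have hdc : d * c = 1 := by
        have : k * 1 = k * (d * c) := by nlinarith [hke]
        exact (mul_left_cancel₀ hkne this).symm
      have hd1 : d = 1 ∨ d = -1 := Int.isUnit_iff.mp (IsUnit.of_mul_eq_one c hdc)
      apply h1D
      rcases hd1 with h | h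
      · rwa [h] at hdD
      · have := D.neg_mem hdD
        rwa [h, neg_neg] at this
    -- apply the Kronecker-type lemma
    set x : ↥S → 𝕋 := fun t => k • (t : 𝕋) with hx
    set y : ↥S → 𝕋 := fun t => e • (t : 𝕋) with hy
    have hkron : y ∈ closure ((AddSubgroup.zmultiples x : AddSubgroup (↥S → 𝕋)) :
        Set (↥S → 𝕋)) := by
      apply kronecker
      intro a ha
      have hsx : caF a x = k • caF a (fun t : ↥S => (t : 𝕋)) := by
        rw [caF_apply, caF_apply, Finset.smul_sum]
        exact Finset.sum_congr rfl fun t _ => smul_comm _ _ _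
      have hsy : caF a y = e • caF a (fun t : ↥S => (t : 𝕋)) := by
        rw [caF_apply, caF_apply, Finset.smul_sum]
        exact Finset.sum_congr rfl fun t _ => smul_comm _ _ _
      set s : 𝕋 := caF a (fun t : ↥S => (t : 𝕋)) with hs
      have hsS : s ∈ S := by
        rw [hs, caF_apply]
        exact AddSubgroup.sum_mem S fun t _ => AddSubgroup.zsmul_mem S t.2 _
      rw [hsx] at ha
      obtain ⟨j, hj⟩ := torsion_exists hk s ha
      have hjD : j ∈ D := by
        rw [hmemD]
        rw [hj] at hsS
        exact hsS
      have hdj : d ∣ j := by rwa [hd, Int.mem_zmultiples_iff] at hjD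
      obtain ⟨c, hc⟩ := hdj
      rw [hsy, hj, hc, smul_smul]
      have hek : e * (d * c) = c * k := by rw [hke]; ring
      rw [hek, mul_smul, hku, smul_zero]
    have hsub : ((AddSubgroup.zmultiples x : AddSubgroup (↥S → 𝕋)) : Set (↥S → 𝕋)) ⊆ C := by
      intro w hw
      rw [SetLike.mem_coe, AddSubgroup.mem_zmultiples_iff] at hw
      obtain ⟨n, hn⟩ := hw
      have hnx : w = (fun m : ℤ => fun t : ↥S => m • (t : 𝕋)) (n * k) := by
        rw [← hn]
        funext t
        show n • (k • (t : 𝕋)) = (n * k) • (t : 𝕋)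
        rw [mul_smul]
      rw [hnx]
      have hmem : (n * k) ∈ ((AddSubgroup.zmultiples k : AddSubgroup ℤ) : Set ℤ) := by
        rw [SetLike.mem_coe, hmemZ]
        exact ⟨n, mul_comm n k⟩
      rw [← hCpre] at hmem
      exact hmem
    have hyC : y ∈ C := closure_minimal hsub hCclosed hkron
    have heC : (fun t : ↥S => e • (t : 𝕋)) ∈ C := hyC
    have : e ∈ ((AddSubgroup.zmultiples k : AddSubgroup ℤ) : Set ℤ) := by
      rw [← hCpre]
      exact heC
    rw [SetLike.mem_coe, hmemZ] at this
    exact hknde this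
  · -- easy direction
    intro huS
    have hle : tauZ S ≤ TopologicalSpace.induced (fun n : ℤ => n • u) inferInstance := by
      rw [tauZ]
      exact iInf₂_le u huS
    have hclosed' : @IsClosed ℤ (TopologicalSpace.induced (fun n : ℤ => n • u) inferInstance)
        ((AddSubgroup.zmultiples k : AddSubgroup ℤ) : Set ℤ) := by
      rw [isClosed_induced_iff]
      refine ⟨{0}, isClosed_singleton, ?_⟩
      ext n
      simp only [Set.mem_preimage, Set.mem_singleton_iff, SetLike.mem_coe, hmemZ n]
      exact zsmul_inv_eq_zero_iff hk n
    exact hclosed'.mono hle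

end Main
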